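/- The error of the convergent 60499999499/490050000000 of C₁₀ (the convergent truncated immediately before the high water mark of HWM number 5) satisfies 9·10^(−190) < 60499999499/490050000000 − C₁₀ < 9.2·10^(−190); in particular the error is approximately 9.1·10^(−190) and the convergent exceeds C₁₀. -/

import Mathlib

set_option maxRecDepth 10000

/-- `pos n` is the position in the decimal expansion of Champernowne's constant
of the last digit of the integer `n`. -/
def pos (n : ℕ) : ℕ := ∑ k ∈ Finset.Icc 1 n, (Nat.digits 10 k).length

/-- Champernowne's constant in base ten. -/
noncomputable def C₁₀ : ℝ := ∑' n : ℕ, ((n + 1 : ℕ) : ℝ) / 10 ^ pos (n + 1)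

lemma pos_eq (n : ℕ) : pos n = ∑ i ∈ Finset.range n, (Nat.digits 10 (1 + i)).length := by
  rw [pos, ← Finset.Ico_add_one_right_eq_Icc, Finset.sum_Ico_eq_sum_range]; simp

lemma pos_succ (n : ℕ) : pos (n + 1) = pos n + (Nat.digits 10 (n + 1)).length := by
  rw [pos_eq, Finset.sum_range_succ, ← pos_eq, Nat.add_comm 1 n]

lemma pos_ge (n : ℕ) : n ≤ pos n := by
  calc n = ∑ _k ∈ Finset.Icc 1 n, 1 := by simp
  _ ≤ pos n := Finset.sum_le_sum fun k hk => by
      rw [Finset.mem_Icc] at hk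
      exact List.length_pos_iff.mpr (Nat.digits_ne_nil_iff_ne_zero.mpr (by omega))


lemma posv0 : pos 0 = 0 := by simp [pos]

lemma posv1 : pos 1 = 1 := by
  rw [show (1:ℕ) = 0 + 1 from rfl, pos_succ, posv0]; simp

lemma posv2 : pos 2 = 2 := by
  rw [show (2:ℕ) = 1 + 1 from rfl, pos_succ, posv1]; simp

lemma posv3 : pos 3 = 3 := by
  rw [show (3:ℕ) = 2 + 1 from rfl, pos_succ, posv2]; simp

lemma posv4 : pos 4 = 4 := by
  rw [show (4:ℕ) = 3 + 1 from rfl, pos_succ, posv3]; simp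

lemma posv5 : pos 5 = 5 := by
  rw [show (5:ℕ) = 4 + 1 from rfl, pos_succ, posv4]; simp

lemma posv6 : pos 6 = 6 := by
  rw [show (6:ℕ) = 5 + 1 from rfl, pos_succ, posv5]; simp

lemma posv7 : pos 7 = 7 := by
  rw [show (7:ℕ) = 6 + 1 from rfl, pos_succ, posv6]; simp

lemma posv8 : pos 8 = 8 := by
  rw [show (8:ℕ) = 7 + 1 from rfl, pos_succ, posv7]; simp

lemma posv9 : pos 9 = 9 := by
  rw [show (9:ℕ) = 8 + 1 from rfl, pos_succ, posv8]; simp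

lemma posv10 : pos 10 = 11 := by
  rw [show (10:ℕ) = 9 + 1 from rfl, pos_succ, posv9]; simp

lemma posv11 : pos 11 = 13 := by
  rw [show (11:ℕ) = 10 + 1 from rfl, pos_succ, posv10]; simp

lemma posv12 : pos 12 = 15 := by
  rw [show (12:ℕ) = 11 + 1 from rfl, pos_succ, posv11]; simp

lemma posv13 : pos 13 = 17 := by
  rw [show (13:ℕ) = 12 + 1 from rfl, pos_succ, posv12]; simp

lemma posv14 : pos 14 = 19 := by
  rw [show (14:ℕ) = 13 + 1 from rfl, pos_succ, posv13]; simp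

lemma posv15 : pos 15 = 21 := by
  rw [show (15:ℕ) = 14 + 1 from rfl, pos_succ, posv14]; simp

lemma posv16 : pos 16 = 23 := by
  rw [show (16:ℕ) = 15 + 1 from rfl, pos_succ, posv15]; simp

lemma posv17 : pos 17 = 25 := by
  rw [show (17:ℕ) = 16 + 1 from rfl, pos_succ, posv16]; simp

lemma posv18 : pos 18 = 27 := by
  rw [show (18:ℕ) = 17 + 1 from rfl, pos_succ, posv17]; simp

lemma posv19 : pos 19 = 29 := by
  rw [show (19:ℕ) = 18 + 1 from rfl, pos_succ, posv18]; simp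

lemma posv20 : pos 20 = 31 := by
  rw [show (20:ℕ) = 19 + 1 from rfl, pos_succ, posv19]; simp

lemma posv21 : pos 21 = 33 := by
  rw [show (21:ℕ) = 20 + 1 from rfl, pos_succ, posv20]; simp

lemma posv22 : pos 22 = 35 := by
  rw [show (22:ℕ) = 21 + 1 from rfl, pos_succ, posv21]; simp

lemma posv23 : pos 23 = 37 := by
  rw [show (23:ℕ) = 22 + 1 from rfl, pos_succ, posv22]; simp

lemma posv24 : pos 24 = 39 := by
  rw [show (24:ℕ) = 23 + 1 from rfl, pos_succ, posv23]; simp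

lemma posv25 : pos 25 = 41 := by
  rw [show (25:ℕ) = 24 + 1 from rfl, pos_succ, posv24]; simp

lemma posv26 : pos 26 = 43 := by
  rw [show (26:ℕ) = 25 + 1 from rfl, pos_succ, posv25]; simp

lemma posv27 : pos 27 = 45 := by
  rw [show (27:ℕ) = 26 + 1 from rfl, pos_succ, posv26]; simp

lemma posv28 : pos 28 = 47 := by
  rw [show (28:ℕ) = 27 + 1 from rfl, pos_succ, posv27]; simp

lemma posv29 : pos 29 = 49 := by
  rw [show (29:ℕ) = 28 + 1 from rfl, pos_succ, posv28]; simp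

lemma posv30 : pos 30 = 51 := by
  rw [show (30:ℕ) = 29 + 1 from rfl, pos_succ, posv29]; simp

lemma posv31 : pos 31 = 53 := by
  rw [show (31:ℕ) = 30 + 1 from rfl, pos_succ, posv30]; simp

lemma posv32 : pos 32 = 55 := by
  rw [show (32:ℕ) = 31 + 1 from rfl, pos_succ, posv31]; simp

lemma posv33 : pos 33 = 57 := by
  rw [show (33:ℕ) = 32 + 1 from rfl, pos_succ, posv32]; simp

lemma posv34 : pos 34 = 59 := by
  rw [show (34:ℕ) = 33 + 1 from rfl, pos_succ, posv33]; simp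

lemma posv35 : pos 35 = 61 := by
  rw [show (35:ℕ) = 34 + 1 from rfl, pos_succ, posv34]; simp

lemma posv36 : pos 36 = 63 := by
  rw [show (36:ℕ) = 35 + 1 from rfl, pos_succ, posv35]; simp

lemma posv37 : pos 37 = 65 := by
  rw [show (37:ℕ) = 36 + 1 from rfl, pos_succ, posv36]; simp

lemma posv38 : pos 38 = 67 := by
  rw [show (38:ℕ) = 37 + 1 from rfl, pos_succ, posv37]; simp

lemma posv39 : pos 39 = 69 := by
  rw [show (39:ℕ) = 38 + 1 from rfl, pos_succ, posv38]; simp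

lemma posv40 : pos 40 = 71 := by
  rw [show (40:ℕ) = 39 + 1 from rfl, pos_succ, posv39]; simp

lemma posv41 : pos 41 = 73 := by
  rw [show (41:ℕ) = 40 + 1 from rfl, pos_succ, posv40]; simp

lemma posv42 : pos 42 = 75 := by
  rw [show (42:ℕ) = 41 + 1 from rfl, pos_succ, posv41]; simp

lemma posv43 : pos 43 = 77 := by
  rw [show (43:ℕ) = 42 + 1 from rfl, pos_succ, posv42]; simp

lemma posv44 : pos 44 = 79 := by
  rw [show (44:ℕ) = 43 + 1 from rfl, pos_succ, posv43]; simp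

lemma posv45 : pos 45 = 81 := by
  rw [show (45:ℕ) = 44 + 1 from rfl, pos_succ, posv44]; simp

lemma posv46 : pos 46 = 83 := by
  rw [show (46:ℕ) = 45 + 1 from rfl, pos_succ, posv45]; simp

lemma posv47 : pos 47 = 85 := by
  rw [show (47:ℕ) = 46 + 1 from rfl, pos_succ, posv46]; simp

lemma posv48 : pos 48 = 87 := by
  rw [show (48:ℕ) = 47 + 1 from rfl, pos_succ, posv47]; simp

lemma posv49 : pos 49 = 89 := by
  rw [show (49:ℕ) = 48 + 1 from rfl, pos_succ, posv48]; simp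

lemma posv50 : pos 50 = 91 := by
  rw [show (50:ℕ) = 49 + 1 from rfl, pos_succ, posv49]; simp

lemma posv51 : pos 51 = 93 := by
  rw [show (51:ℕ) = 50 + 1 from rfl, pos_succ, posv50]; simp

lemma posv52 : pos 52 = 95 := by
  rw [show (52:ℕ) = 51 + 1 from rfl, pos_succ, posv51]; simp

lemma posv53 : pos 53 = 97 := by
  rw [show (53:ℕ) = 52 + 1 from rfl, pos_succ, posv52]; simp

lemma posv54 : pos 54 = 99 := by
  rw [show (54:ℕ) = 53 + 1 from rfl, pos_succ, posv53]; simp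

lemma posv55 : pos 55 = 101 := by
  rw [show (55:ℕ) = 54 + 1 from rfl, pos_succ, posv54]; simp

lemma posv56 : pos 56 = 103 := by
  rw [show (56:ℕ) = 55 + 1 from rfl, pos_succ, posv55]; simp

lemma posv57 : pos 57 = 105 := by
  rw [show (57:ℕ) = 56 + 1 from rfl, pos_succ, posv56]; simp

lemma posv58 : pos 58 = 107 := by
  rw [show (58:ℕ) = 57 + 1 from rfl, pos_succ, posv57]; simp

lemma posv59 : pos 59 = 109 := by
  rw [show (59:ℕ) = 58 + 1 from rfl, pos_succ, posv58]; simp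

lemma posv60 : pos 60 = 111 := by
  rw [show (60:ℕ) = 59 + 1 from rfl, pos_succ, posv59]; simp

lemma posv61 : pos 61 = 113 := by
  rw [show (61:ℕ) = 60 + 1 from rfl, pos_succ, posv60]; simp

lemma posv62 : pos 62 = 115 := by
  rw [show (62:ℕ) = 61 + 1 from rfl, pos_succ, posv61]; simp

lemma posv63 : pos 63 = 117 := by
  rw [show (63:ℕ) = 62 + 1 from rfl, pos_succ, posv62]; simp

lemma posv64 : pos 64 = 119 := by
  rw [show (64:ℕ) = 63 + 1 from rfl, pos_succ, posv63]; simp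

lemma posv65 : pos 65 = 121 := by
  rw [show (65:ℕ) = 64 + 1 from rfl, pos_succ, posv64]; simp

lemma posv66 : pos 66 = 123 := by
  rw [show (66:ℕ) = 65 + 1 from rfl, pos_succ, posv65]; simp

lemma posv67 : pos 67 = 125 := by
  rw [show (67:ℕ) = 66 + 1 from rfl, pos_succ, posv66]; simp

lemma posv68 : pos 68 = 127 := by
  rw [show (68:ℕ) = 67 + 1 from rfl, pos_succ, posv67]; simp

lemma posv69 : pos 69 = 129 := by
  rw [show (69:ℕ) = 68 + 1 from rfl, pos_succ, posv68]; simp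

lemma posv70 : pos 70 = 131 := by
  rw [show (70:ℕ) = 69 + 1 from rfl, pos_succ, posv69]; simp

lemma posv71 : pos 71 = 133 := by
  rw [show (71:ℕ) = 70 + 1 from rfl, pos_succ, posv70]; simp

lemma posv72 : pos 72 = 135 := by
  rw [show (72:ℕ) = 71 + 1 from rfl, pos_succ, posv71]; simp

lemma posv73 : pos 73 = 137 := by
  rw [show (73:ℕ) = 72 + 1 from rfl, pos_succ, posv72]; simp

lemma posv74 : pos 74 = 139 := by
  rw [show (74:ℕ) = 73 + 1 from rfl, pos_succ, posv73]; simp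

lemma posv75 : pos 75 = 141 := by
  rw [show (75:ℕ) = 74 + 1 from rfl, pos_succ, posv74]; simp

lemma posv76 : pos 76 = 143 := by
  rw [show (76:ℕ) = 75 + 1 from rfl, pos_succ, posv75]; simp

lemma posv77 : pos 77 = 145 := by
  rw [show (77:ℕ) = 76 + 1 from rfl, pos_succ, posv76]; simp

lemma posv78 : pos 78 = 147 := by
  rw [show (78:ℕ) = 77 + 1 from rfl, pos_succ, posv77]; simp

lemma posv79 : pos 79 = 149 := by
  rw [show (79:ℕ) = 78 + 1 from rfl, pos_succ, posv78]; simp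

lemma posv80 : pos 80 = 151 := by
  rw [show (80:ℕ) = 79 + 1 from rfl, pos_succ, posv79]; simp

lemma posv81 : pos 81 = 153 := by
  rw [show (81:ℕ) = 80 + 1 from rfl, pos_succ, posv80]; simp

lemma posv82 : pos 82 = 155 := by
  rw [show (82:ℕ) = 81 + 1 from rfl, pos_succ, posv81]; simp

lemma posv83 : pos 83 = 157 := by
  rw [show (83:ℕ) = 82 + 1 from rfl, pos_succ, posv82]; simp

lemma posv84 : pos 84 = 159 := by
  rw [show (84:ℕ) = 83 + 1 from rfl, pos_succ, posv83]; simp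

lemma posv85 : pos 85 = 161 := by
  rw [show (85:ℕ) = 84 + 1 from rfl, pos_succ, posv84]; simp

lemma posv86 : pos 86 = 163 := by
  rw [show (86:ℕ) = 85 + 1 from rfl, pos_succ, posv85]; simp

lemma posv87 : pos 87 = 165 := by
  rw [show (87:ℕ) = 86 + 1 from rfl, pos_succ, posv86]; simp

lemma posv88 : pos 88 = 167 := by
  rw [show (88:ℕ) = 87 + 1 from rfl, pos_succ, posv87]; simp

lemma posv89 : pos 89 = 169 := by
  rw [show (89:ℕ) = 88 + 1 from rfl, pos_succ, posv88]; simp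

lemma posv90 : pos 90 = 171 := by
  rw [show (90:ℕ) = 89 + 1 from rfl, pos_succ, posv89]; simp

lemma posv91 : pos 91 = 173 := by
  rw [show (91:ℕ) = 90 + 1 from rfl, pos_succ, posv90]; simp

lemma posv92 : pos 92 = 175 := by
  rw [show (92:ℕ) = 91 + 1 from rfl, pos_succ, posv91]; simp

lemma posv93 : pos 93 = 177 := by
  rw [show (93:ℕ) = 92 + 1 from rfl, pos_succ, posv92]; simp

lemma posv94 : pos 94 = 179 := by
  rw [show (94:ℕ) = 93 + 1 from rfl, pos_succ, posv93]; simp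

lemma posv95 : pos 95 = 181 := by
  rw [show (95:ℕ) = 94 + 1 from rfl, pos_succ, posv94]; simp

lemma posv96 : pos 96 = 183 := by
  rw [show (96:ℕ) = 95 + 1 from rfl, pos_succ, posv95]; simp

lemma posv97 : pos 97 = 185 := by
  rw [show (97:ℕ) = 96 + 1 from rfl, pos_succ, posv96]; simp

lemma posv98 : pos 98 = 187 := by
  rw [show (98:ℕ) = 97 + 1 from rfl, pos_succ, posv97]; simp

lemma posv99 : pos 99 = 189 := by
  rw [show (99:ℕ) = 98 + 1 from rfl, pos_succ, posv98]; simp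

lemma posv100 : pos 100 = 192 := by
  rw [show (100:ℕ) = 99 + 1 from rfl, pos_succ, posv99]; simp

lemma posv101 : pos 101 = 195 := by
  rw [show (101:ℕ) = 100 + 1 from rfl, pos_succ, posv100]; simp

lemma posv102 : pos 102 = 198 := by
  rw [show (102:ℕ) = 101 + 1 from rfl, pos_succ, posv101]; simp

lemma pos_ge2 (n : ℕ) (hn : 10 ≤ n) : 2 * n - 9 ≤ pos n := by
  have hsplit : Finset.Icc 1 n = Finset.Icc 1 9 ∪ Finset.Icc 10 n := by
    ext x; simp only [Finset.mem_Icc, Finset.mem_union]; omega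
  have hdisj : Disjoint (Finset.Icc 1 9) (Finset.Icc 10 n) := by
    rw [Finset.disjoint_left]; intro a ha hb
    rw [Finset.mem_Icc] at ha hb; omega
  have hlb : ∑ _k ∈ Finset.Icc 10 n, 2 ≤ ∑ k ∈ Finset.Icc 10 n, (Nat.digits 10 k).length := by
    refine Finset.sum_le_sum fun k hk => ?_
    rw [Finset.mem_Icc] at hk
    by_contra h
    have h1 : (Nat.digits 10 k).length ≤ 1 := by omega
    have h2 := Nat.lt_base_pow_length_digits (b := 10) (m := k) (by norm_num)
    have h3 : (10:ℕ) ^ (Nat.digits 10 k).length ≤ 10 ^ 1 := Nat.pow_le_pow_right (by norm_num) h1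
    omega
  have hcard : (Finset.Icc 10 n).card = n - 9 := by rw [Nat.card_Icc]; omega
  have h9 : ∑ x ∈ Finset.Icc 1 9, (Nat.digits 10 x).length = 9 := posv9
  rw [pos, hsplit, Finset.sum_union hdisj, h9]
  simp only [Finset.sum_const, smul_eq_mul, hcard] at hlb
  omega

lemma S_eq : ∑ n ∈ Finset.range 102, ((n + 1 : ℕ) : ℝ) / 10 ^ pos (n + 1) = 61728394550556065707580859096010611162126313641465156616671768186919702071217222732374247525762677277828792980308131823283338434853586368737883889399040914192429343944495459646974798489949550050551 / 500000000000000000000000000000000000000000000000000000000000000000000000000000000000000000000000000000000000000000000000000000000000000000000000000000000000000000000000000000000000000000000000000000 := by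
  simp only [Finset.sum_range_succ, Finset.sum_range_zero, Nat.reduceAdd, posv1, posv2, posv3, posv4, posv5, posv6, posv7, posv8, posv9, posv10, posv11, posv12, posv13, posv14, posv15, posv16, posv17, posv18, posv19, posv20, posv21, posv22, posv23, posv24, posv25, posv26, posv27, posv28, posv29, posv30, posv31, posv32, posv33, posv34, posv35, posv36, posv37, posv38, posv39, posv40, posv41, posv42, posv43, posv44, posv45, posv46, posv47, posv48, posv49, posv50, posv51, posv52, posv53, posv54, posv55, posv56, posv57, posv58, posv59, posv60, posv61, posv62, posv63, posv64, posv65, posv66, posv67, posv68, posv69, posv70, posv71, posv72, posv73, posv74, posv75, posv76, posv77, posv78, posv79, posv80, posv81, posv82, posv83, posv84, posv85, posv86, posv87, posv88, posv89, posv90, posv91, posv92, posv93, posv94, posv95, posv96, posv97, posv98, posv99, posv100, posv101, posv102]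
  norm_num

theorem hwm5_convergent_error :
    9 * (10 : ℝ) ^ (-190 : ℤ) < 60499999499 / 490050000000 - C₁₀ ∧
    60499999499 / 490050000000 - C₁₀ < 9.2 * (10 : ℝ) ^ (-190 : ℤ) := by
  set f : ℕ → ℝ := fun n => ((n + 1 : ℕ) : ℝ) / 10 ^ pos (n + 1) with hf
  have hfnn : ∀ n, 0 ≤ f n := fun n => by positivity
  have hfle : ∀ n, f n ≤ (1/5:ℝ)^n := by
    intro n
    have h1 : (10:ℝ)^(n+1) ≤ 10^(pos (n+1)) := pow_le_pow_right₀ (by norm_num) (pos_ge (n+1))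
    have h2 : ((n+1:ℕ):ℝ) ≤ 2^(n+1) := by
      exact_mod_cast (Nat.lt_two_pow_self (n := n+1)).le
    have h3 : f n ≤ (2:ℝ)^(n+1) / 10^(n+1) := by
      rw [hf]
      exact div_le_div₀ (by positivity) h2 (by positivity) h1
    calc f n ≤ (2:ℝ)^(n+1)/10^(n+1) := h3
      _ = (1/5:ℝ)^(n+1) := by rw [show ((1:ℝ)/5) = 2/10 by norm_num, div_pow]
      _ ≤ (1/5:ℝ)^n := pow_le_pow_of_le_one (by norm_num) (by norm_num) (by omega)
  have hsum : Summable f :=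
    Summable.of_nonneg_of_le hfnn hfle (summable_geometric_of_lt_one (by norm_num) (by norm_num))
  have htail : ∀ n : ℕ, f (n + 102) ≤ (103:ℝ)/10^197 * (1/50)^n := by
    intro n
    have hp : 2*n + 197 ≤ pos (n + 103) := by
      have := pos_ge2 (n + 103) (by omega)
      omega
    have h1 : (10:ℝ)^(2*n+197) ≤ 10^(pos (n+103)) := pow_le_pow_right₀ (by norm_num) hp
    have h2 : ((n + 102 + 1:ℕ):ℝ) ≤ 103 * 2^n := by
      have : (n + 103 : ℕ) ≤ 103 * 2^n := by
        calc n + 103 ≤ 103 * (n+1) := by omega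
          _ ≤ 103 * 2^n := Nat.mul_le_mul_left _ (Nat.lt_two_pow_self (n := n))
      exact_mod_cast (by omega : (n + 102 + 1 : ℕ) = n + 103) ▸ this
    have h3 : f (n + 102) ≤ (103:ℝ) * 2^n / 10^(2*n+197) := by
      rw [hf]
      simp only []
      have : n + 102 + 1 = n + 103 := by omega
      rw [this]
      exact div_le_div₀ (by positivity) (by exact_mod_cast h2) (by positivity) h1
    calc f (n + 102) ≤ (103:ℝ) * 2^n / 10^(2*n+197) := h3
      _ = (103:ℝ)/10^197 * (1/50)^n := by
          have h50 : ((1:ℝ)/50)^n = 2^n / (10^2)^n := by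
            rw [← div_pow]; norm_num
          rw [pow_add, pow_mul, h50]
          ring
  have hgsum : Summable (fun n : ℕ => (103:ℝ)/10^197 * (1/50)^n) :=
    (summable_geometric_of_lt_one (by norm_num) (by norm_num)).mul_left _
  have hTsum : Summable (fun n => f (n + 102)) := (summable_nat_add_iff 102).mpr hsum
  have hT_le : ∑' n, f (n + 102) ≤ 110/10^197 := by
    calc ∑' n, f (n + 102) ≤ ∑' n : ℕ, (103:ℝ)/10^197 * (1/50)^n :=
        Summable.tsum_le_tsum htail hTsum hgsum
      _ = (103:ℝ)/10^197 * (1 - 1/50)⁻¹ := by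
          rw [tsum_mul_left, tsum_geometric_of_lt_one (by norm_num) (by norm_num)]
      _ ≤ 110/10^197 := by norm_num
  have hT_nn : 0 ≤ ∑' n, f (n + 102) := tsum_nonneg fun n => hfnn _
  have hC : C₁₀ = ∑ n ∈ Finset.range 102, f n + ∑' n, f (n + 102) :=
    (Summable.sum_add_tsum_nat_add 102 hsum).symm
  have hS : ∑ n ∈ Finset.range 102, f n = (61728394550556065707580859096010611162126313641465156616671768186919702071217222732374247525762677277828792980308131823283338434853586368737883889399040914192429343944495459646974798489949550050551 : ℝ) / 500000000000000000000000000000000000000000000000000000000000000000000000000000000000000000000000000000000000000000000000000000000000000000000000000000000000000000000000000000000000000000000000000000 := S_eq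
  have hzp : ((10:ℝ) ^ (-190 : ℤ)) = 1/10^190 := by norm_num
  rw [hC, hS, hzp]
  constructor
  · have key : (9:ℝ) * (1/10^190) <
        60499999499 / 490050000000 - (61728394550556065707580859096010611162126313641465156616671768186919702071217222732374247525762677277828792980308131823283338434853586368737883889399040914192429343944495459646974798489949550050551 : ℝ) / 500000000000000000000000000000000000000000000000000000000000000000000000000000000000000000000000000000000000000000000000000000000000000000000000000000000000000000000000000000000000000000000000000000 - 110/10^197 := by norm_num
    linarith [hT_le]
  · have key : (60499999499 : ℝ) / 490050000000 - (61728394550556065707580859096010611162126313641465156616671768186919702071217222732374247525762677277828792980308131823283338434853586368737883889399040914192429343944495459646974798489949550050551 : ℝ) / 500000000000000000000000000000000000000000000000000000000000000000000000000000000000000000000000000000000000000000000000000000000000000000000000000000000000000000000000000000000000000000000000000000 <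
        9.2 * (1/10^190) := by norm_num
    linarith [hT_nn]
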